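/- Let f : Finset V → ℝ₊ be a monotone α-submodular function (0 < α ≤ 1 constant) with uniform constraint |X| ≤ B, and let m = o(B). Every solution P_i produced by DGS, obtained by greedily adding B - m elements of maximal marginal gain and then adding m arbitrary further elements, satisfies f(P_i) ≥ (1 - o(1)) · (1 - e^(-α)) · f(OPT). -/

import Mathlib

private lemma aux_sum {V : Type*} [DecidableEq V] (f : Finset V → ℝ)
    (α : ℝ)
    (hsub : ∀ (A B : Finset V) (v : V), A ⊆ B → v ∉ B →
      f (insert v A) - f A ≥ α * (f (insert v B) - f B))
    (A : Finset V) : ∀ T : Finset V, Disjoint A T →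
    α * (f (A ∪ T) - f A) ≤ ∑ v ∈ T, (f (insert v A) - f A) := by
  intro T
  induction T using Finset.induction_on with
  | empty => intro _; simp
  | insert v T hvT ih =>
    intro hd
    have hd' : Disjoint A T := hd.mono_right (Finset.subset_insert v T)
    have hvA : v ∉ A := fun h => (Finset.disjoint_left.mp hd) h (Finset.mem_insert_self v T)
    have hv : v ∉ A ∪ T := by simp [hvA, hvT]
    have h1 := hsub A (A ∪ T) v Finset.subset_union_left hv
    have h2 := ih hd'
    rw [Finset.sum_insert hvT]
    have hins : A ∪ insert v T = insert v (A ∪ T) := by ext x; simp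
    rw [hins]
    have hr : α * (f (insert v (A ∪ T)) - f A)
        = α * (f (insert v (A ∪ T)) - f (A ∪ T)) + α * (f (A ∪ T) - f A) := by ring
    linarith

/-- DGS guarantee (non-asymptotic form): for a monotone `α`-submodular function `f`
(`0 < α ≤ 1`, `f ∅ = 0`) with uniform constraint `|X| ≤ B`, if `S` is the greedy
sequence adding a maximal-marginal-gain element at each of the first `B - m` steps,
then every solution `P` extending `S (B - m)` satisfies
`f P ≥ (1 - (1 - α/B)^(B-m)) · f OPT`.  (For `m = o(B)` and constant `α` this is
`(1 - o(1)) (1 - e^{-α}) f OPT`.) -/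
theorem stmt_4 {V : Type*} [Fintype V] [DecidableEq V] (f : Finset V → ℝ)
    (hmono : ∀ A B : Finset V, A ⊆ B → f A ≤ f B) (hf0 : f ∅ = 0)
    (α : ℝ) (hα : 0 < α) (hα1 : α ≤ 1)
    (hsub : ∀ (A B : Finset V) (v : V), A ⊆ B → v ∉ B →
      f (insert v A) - f A ≥ α * (f (insert v B) - f B))
    (B m : ℕ) (hB : 1 ≤ B) (hm : m ≤ B) (hn : B ≤ Fintype.card V)
    (OPT : Finset V) (hOPTcard : OPT.card ≤ B)
    (hOPT : ∀ X : Finset V, X.card ≤ B → f X ≤ f OPT)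
    (S : ℕ → Finset V) (hS0 : S 0 = ∅)
    (hstep : ∀ j : ℕ, j < B - m → ∃ v ∉ S j, S (j + 1) = insert v (S j) ∧
      ∀ w ∉ S j, f (insert w (S j)) - f (S j) ≤ f (S (j + 1)) - f (S j))
    (P : Finset V) (hSP : S (B - m) ⊆ P) (hPcard : P.card ≤ B) :
    f P ≥ (1 - (1 - α / B) ^ (B - m)) * f OPT := by
  have hB1 : (1:ℝ) ≤ (B:ℝ) := by exact_mod_cast hB
  have hBpos : (0:ℝ) < B := by linarith
  have hq0 : 0 ≤ 1 - α / B := by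
    rw [sub_nonneg]
    exact div_le_one_of_le₀ (le_trans hα1 hB1) hBpos.le
  have hOPT0 : 0 ≤ f OPT := hf0 ▸ hmono ∅ OPT (Finset.empty_subset _)
  have key : ∀ j, j ≤ B - m → f OPT - f (S j) ≤ (1 - α/B)^j * f OPT := by
    intro j
    induction j with
    | zero => intro _; simp [hS0, hf0]
    | succ j ih =>
      intro hj
      have hj' : j < B - m := Nat.lt_of_succ_le hj
      obtain ⟨v, hv, hSsucc, hmax⟩ := hstep j hj'
      have hstep0 : 0 ≤ f (S (j+1)) - f (S j) := by
        rw [hSsucc]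
        have := hmono (S j) (insert v (S j)) (Finset.subset_insert _ _)
        linarith
      have hsum := aux_sum f α hsub (S j) (OPT \ S j) Finset.sdiff_disjoint.symm
      have hub : ∑ x ∈ OPT \ S j, (f (insert x (S j)) - f (S j))
          ≤ (B:ℝ) * (f (S (j+1)) - f (S j)) := by
        calc ∑ x ∈ OPT \ S j, (f (insert x (S j)) - f (S j))
            ≤ ∑ _x ∈ OPT \ S j, (f (S (j+1)) - f (S j)) := by
              apply Finset.sum_le_sum; intro x hx
              exact hmax x (Finset.mem_sdiff.mp hx).2
          _ = ((OPT \ S j).card : ℝ) * (f (S (j+1)) - f (S j)) := by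
              rw [Finset.sum_const, nsmul_eq_mul]
          _ ≤ (B:ℝ) * (f (S (j+1)) - f (S j)) := by
              apply mul_le_mul_of_nonneg_right _ hstep0
              have : (OPT \ S j).card ≤ B :=
                le_trans (Finset.card_le_card Finset.sdiff_subset) hOPTcard
              exact_mod_cast this
      have hcover : f OPT ≤ f (S j ∪ (OPT \ S j)) := by
        apply hmono
        intro x hx
        by_cases hxS : x ∈ S j <;> simp [hx, hxS]
      have h1 : α * (f OPT - f (S j)) ≤ (B:ℝ) * (f (S (j+1)) - f (S j)) := by
        have hmul := mul_le_mul_of_nonneg_left (sub_le_sub_right hcover (f (S j))) hα.le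
        linarith
      have h3 : (α/B) * (f OPT - f (S j)) ≤ f (S (j+1)) - f (S j) := by
        rw [div_mul_eq_mul_div, div_le_iff₀ hBpos]
        nlinarith
      have h2 : f OPT - f (S (j+1)) ≤ (1 - α/B) * (f OPT - f (S j)) := by
        have hr : (1 - α/B) * (f OPT - f (S j))
            = (f OPT - f (S j)) - (α/B)*(f OPT - f (S j)) := by ring
        linarith
      have ihj := ih (le_of_lt hj')
      calc f OPT - f (S (j+1)) ≤ (1 - α/B) * (f OPT - f (S j)) := h2
        _ ≤ (1 - α/B) * ((1 - α/B)^j * f OPT) := mul_le_mul_of_nonneg_left ihj hq0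
        _ = (1 - α/B)^(j+1) * f OPT := by ring
  have hfin := key (B - m) le_rfl
  have hPS := hmono _ _ hSP
  have hr : (1 - (1 - α / B) ^ (B - m)) * f OPT
      = f OPT - (1 - α / B) ^ (B - m) * f OPT := by ring
  linarith
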